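/- Let b : ℝ → ℝ be continuous and 2π-periodic, and let c ∈ ℝ. Define H(z) := conj( (1/2π)∫₀^{2π} b(t)·(e^{it} + z)/(e^{it} − z) dt ) + i·c for z in the open unit disk D. Then: (i) the function z ↦ conj(H(z)) is holomorphic on D (i.e., H satisfies ∂H/∂z = 0 on D); (ii) Im H(0) = c; (iii) for every θ₀ ∈ ℝ, Re H(z) → b(θ₀) as z → e^{iθ₀} within D. Moreover, H is the unique function with these three properties among functions K : D → ℂ such that conj∘K is holomorphic on D. -/

import Mathlib

open Complex Real Metric Filter

/-- The open unit disk in `ℂ`. -/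
noncomputable def unitDisk : Set ℂ := Metric.ball (0 : ℂ) 1

/-- The conjugated Schwarz integral of a boundary datum `b`, shifted by `i·c`. -/
noncomputable def conjSchwarzIntegral (b : ℝ → ℝ) (c : ℝ) (z : ℂ) : ℂ :=
  (starRingEnd ℂ) ((1 / (2 * Real.pi)) * ∫ t in (0 : ℝ)..(2 * Real.pi),
      (b t : ℂ) * ((Complex.exp (Complex.I * t) + z) / (Complex.exp (Complex.I * t) - z)))
    + Complex.I * c


lemma abs_exp_I_mul (t : ℝ) : ‖Complex.exp (Complex.I * t)‖ = 1 := by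
  rw [Complex.norm_exp]; simp

lemma sub_ne' {z : ℂ} (hz : ‖z‖ < 1) (t : ℝ) :
    Complex.exp (Complex.I * t) - z ≠ 0 := by
  intro h
  rw [sub_eq_zero] at h
  rw [← h, abs_exp_I_mul] at hz
  exact lt_irrefl _ hz

noncomputable def Pk (z : ℂ) (t : ℝ) : ℝ :=
  (1 - Complex.normSq z) / Complex.normSq (Complex.exp (Complex.I * t) - z)

lemma re_kernel {z : ℂ} (hz : ‖z‖ < 1) (t : ℝ) :
    (((Complex.exp (Complex.I * t) + z) / (Complex.exp (Complex.I * t) - z)).re) = Pk z t := by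
  set w := Complex.exp (Complex.I * t) with hw
  have hw1 : Complex.normSq w = 1 := by
    rw [Complex.normSq_eq_norm_sq, hw, abs_exp_I_mul]; norm_num
  rw [Complex.div_re, Pk]
  have : (w + z).re * (w - z).re + (w + z).im * (w - z).im
      = Complex.normSq w - Complex.normSq z := by
    simp [Complex.normSq_apply, Complex.add_re, Complex.sub_re, Complex.add_im, Complex.sub_im]
    ring
  rw [← add_div, this, hw1]

lemma cont_inv_sub {z : ℂ} (hz : ‖z‖ < 1) :
    Continuous (fun t : ℝ => (Complex.exp (Complex.I * t) - z)⁻¹) :=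
  Continuous.inv₀ (by fun_prop) (fun t => sub_ne' hz t)

lemma int_kernel {z : ℂ} (hz : ‖z‖ < 1) :
    (∫ t in (0:ℝ)..(2*Real.pi),
      (Complex.exp (Complex.I * t) + z) / (Complex.exp (Complex.I * t) - z)) = 2 * Real.pi := by
  have hzball : z ∈ Metric.ball (0:ℂ) 1 := by simpa using hz
  have hsplit : ∀ t : ℝ, (Complex.exp (Complex.I * t) + z) / (Complex.exp (Complex.I * t) - z)
      = 1 + 2 * z * (Complex.exp (Complex.I * t) - z)⁻¹ := by
    intro t; field_simp [sub_ne' hz t]; ring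
  rcases eq_or_ne z 0 with rfl | hz0
  · simp only [hsplit]; simp
  · have key : (∫ t in (0:ℝ)..(2*Real.pi), (Complex.exp (Complex.I * t) - z)⁻¹) = 0 := by
      have h1 : (∮ w in C((0:ℂ), 1), (w - z)⁻¹) = 2 * Real.pi * Complex.I :=
        circleIntegral.integral_sub_inv_of_mem_ball hzball
      have h0 : (∮ w in C((0:ℂ), 1), (w - 0)⁻¹) = 2 * Real.pi * Complex.I :=
        circleIntegral.integral_sub_inv_of_mem_ball (by simp)
      have hi1 : CircleIntegrable (fun w => (w - z)⁻¹) 0 1 := by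
        apply ContinuousOn.circleIntegrable (by norm_num)
        apply ContinuousOn.inv₀ (by fun_prop)
        intro w hw h
        rw [sub_eq_zero] at h
        subst h
        rw [mem_sphere_zero_iff_norm] at hw
        rw [show ‖w‖ = ‖w‖ from rfl] at hw
        rw [hw] at hz
        exact lt_irrefl _ hz
      have hi0 : CircleIntegrable (fun w => (w - 0)⁻¹) 0 1 := by
        apply ContinuousOn.circleIntegrable (by norm_num)
        apply ContinuousOn.inv₀ (by fun_prop)
        intro w hw h
        rw [sub_eq_zero] at h
        subst h
        simp at hw
      have hsub : (∮ w in C((0:ℂ), 1), ((w - z)⁻¹ - (w - 0)⁻¹)) = 0 := by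
        rw [circleIntegral.integral_sub hi1 hi0, h1, h0, sub_self]
      rw [circleIntegral] at hsub
      have heq : Set.EqOn
          (fun t : ℝ => deriv (circleMap 0 1) t • ((circleMap 0 1 t - z)⁻¹ - (circleMap 0 1 t - 0)⁻¹))
          (fun t : ℝ => (Complex.I * z) * (Complex.exp (Complex.I * t) - z)⁻¹)
          (Set.uIcc (0:ℝ) (2*Real.pi)) := by
        intro t _
        have hcm : circleMap 0 1 t = Complex.exp (Complex.I * t) := by
          simp [circleMap, mul_comm]
        simp only [deriv_circleMap, hcm, smul_eq_mul, sub_zero]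
        have he : Complex.exp (Complex.I * t) ≠ 0 := Complex.exp_ne_zero _
        field_simp [sub_ne' hz t]
        ring
      rw [intervalIntegral.integral_congr heq, intervalIntegral.integral_const_mul] at hsub
      rcases mul_eq_zero.1 hsub with h | h
      · exact absurd h (by simp [hz0, Complex.I_ne_zero])
      · exact h
    simp only [hsplit]
    rw [intervalIntegral.integral_add intervalIntegrable_const
      (show IntervalIntegrable (fun t : ℝ => 2 * z * (Complex.exp (Complex.I * t) - z)⁻¹) _ _ _ from
        (continuous_const.mul (cont_inv_sub hz)).intervalIntegrable _ _),
      intervalIntegral.integral_const_mul, key]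
    simp

lemma Pk_cont {z : ℂ} (hz : ‖z‖ < 1) : Continuous (Pk z) := by
  apply Continuous.div continuous_const
    (Complex.continuous_normSq.comp (by fun_prop))
  intro t h
  exact sub_ne' hz t (by simpa [Complex.normSq_eq_zero] using h)

lemma Pk_nonneg {z : ℂ} (hz : ‖z‖ < 1) (t : ℝ) : 0 ≤ Pk z t := by
  apply div_nonneg _ (Complex.normSq_nonneg _)
  have : Complex.normSq z < 1 := by
    rw [Complex.normSq_eq_norm_sq]; nlinarith [norm_nonneg z]
  linarith

lemma Pk_periodic (z : ℂ) : Function.Periodic (Pk z) (2 * Real.pi) := by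
  intro t
  simp only [Pk]
  congr 3
  push_cast
  rw [mul_add, Complex.exp_add]
  rw [show Complex.I * (2 * Real.pi) = 2 * Real.pi * Complex.I by ring]
  rw [Complex.exp_two_pi_mul_I, mul_one]

lemma kernel_cont {z : ℂ} (hz : ‖z‖ < 1) (b : ℝ → ℝ) (hb : Continuous b) :
    Continuous (fun t : ℝ => (b t : ℂ) *
      ((Complex.exp (Complex.I * t) + z) / (Complex.exp (Complex.I * t) - z))) := by
  apply Continuous.mul (by fun_prop)
  exact Continuous.div (by fun_prop) (by fun_prop) (fun t => sub_ne' hz t)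

lemma int_Pk {z : ℂ} (hz : ‖z‖ < 1) :
    (∫ t in (0:ℝ)..(2*Real.pi), Pk z t) = 2 * Real.pi := by
  have h := int_kernel hz
  have : (∫ t in (0:ℝ)..(2*Real.pi), Pk z t)
      = (∫ t in (0:ℝ)..(2*Real.pi),
        (Complex.exp (Complex.I * t) + z) / (Complex.exp (Complex.I * t) - z)).re := by
    have hint : IntervalIntegrable (fun t : ℝ =>
        (Complex.exp (Complex.I * t) + z) / (Complex.exp (Complex.I * t) - z))
        MeasureTheory.volume 0 (2*Real.pi) := Continuous.intervalIntegrable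
        (Continuous.div (by fun_prop) (by fun_prop) (fun t => sub_ne' hz t)) _ _
    have h2 := Complex.reCLM.intervalIntegral_comp_comm hint
    simp only [Complex.reCLM_apply] at h2
    rw [← h2]
    apply intervalIntegral.integral_congr
    intro t _
    exact (re_kernel hz t).symm
  rw [this, h]
  norm_num

lemma Hre_formula (b : ℝ → ℝ) (hb : Continuous b) (c : ℝ) {z : ℂ} (hz : ‖z‖ < 1) :
    (conjSchwarzIntegral b c z).re
      = (1 / (2 * Real.pi)) * ∫ t in (0:ℝ)..(2*Real.pi), b t * Pk z t := by
  have hint : IntervalIntegrable (fun t : ℝ => (b t : ℂ) *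
      ((Complex.exp (Complex.I * t) + z) / (Complex.exp (Complex.I * t) - z)))
      MeasureTheory.volume 0 (2*Real.pi) := (kernel_cont hz b hb).intervalIntegrable _ _
  have h2 := Complex.reCLM.intervalIntegral_comp_comm hint
  simp only [Complex.reCLM_apply] at h2
  simp only [conjSchwarzIntegral, Complex.add_re, Complex.conj_re]
  have : ((1 / (2 * (Real.pi:ℂ))) * ∫ t in (0 : ℝ)..(2 * Real.pi),
      (b t : ℂ) * ((Complex.exp (Complex.I * t) + z) / (Complex.exp (Complex.I * t) - z))).re
      = (1 / (2 * Real.pi)) * (∫ t in (0 : ℝ)..(2 * Real.pi),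
      (b t : ℂ) * ((Complex.exp (Complex.I * t) + z) / (Complex.exp (Complex.I * t) - z))).re := by
    rw [show (1 / (2 * (Real.pi:ℂ))) = ((1 / (2 * Real.pi) : ℝ) : ℂ) by push_cast; ring]
    exact Complex.re_ofReal_mul _ _
  rw [show ((1:ℂ) / (2 * (Real.pi:ℝ)) : ℂ) = (1 / (2 * (Real.pi:ℂ))) by push_cast; ring] at *
  rw [this, ← h2]
  have : (∫ t in (0:ℝ)..(2*Real.pi), ((b t : ℂ) *
      ((Complex.exp (Complex.I * t) + z) / (Complex.exp (Complex.I * t) - z))).re)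
      = ∫ t in (0:ℝ)..(2*Real.pi), b t * Pk z t := by
    apply intervalIntegral.integral_congr
    intro t _
    simp only []
    rw [Complex.re_ofReal_mul, re_kernel hz t]
  rw [this]
  simp

lemma Him0 (b : ℝ → ℝ) (hb : Continuous b) (c : ℝ) :
    (conjSchwarzIntegral b c 0).im = c := by
  simp only [conjSchwarzIntegral]
  have : (∫ t in (0 : ℝ)..(2 * Real.pi),
      (b t : ℂ) * ((Complex.exp (Complex.I * t) + 0) / (Complex.exp (Complex.I * t) - 0)))
      = ((∫ t in (0 : ℝ)..(2 * Real.pi), b t : ℝ) : ℂ) := by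
    rw [← intervalIntegral.integral_ofReal]
    apply intervalIntegral.integral_congr
    intro t _
    simp [div_self (Complex.exp_ne_zero (Complex.I * t))]
  rw [this]
  simp [Complex.div_im, Complex.div_re]

-- bound on b
lemma bbound (b : ℝ → ℝ) (hb : Continuous b) (hbper : Function.Periodic b (2 * Real.pi)) :
    ∃ M : ℝ, 0 < M ∧ ∀ t, |b t| ≤ M := by
  obtain ⟨M, hM⟩ := (isCompact_Icc (a := (0:ℝ)) (b := 2*Real.pi)).exists_bound_of_continuousOn
    hb.continuousOn
  refine ⟨max M 1, by positivity, fun t => ?_⟩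
  obtain ⟨s, hs, hbs⟩ := hbper.exists_mem_Ico₀ Real.two_pi_pos t
  rw [hbs]
  refine le_trans ?_ (le_max_left _ _)
  exact hM s ⟨hs.1, hs.2.le⟩

lemma S_diff (b : ℝ → ℝ) (hb : Continuous b) (hbper : Function.Periodic b (2 * Real.pi))
    {z₀ : ℂ} (hz₀ : ‖z₀‖ < 1) :
    HasDerivAt (fun z => ∫ t in (0:ℝ)..(2*Real.pi),
      (b t : ℂ) * ((Complex.exp (Complex.I * t) + z) / (Complex.exp (Complex.I * t) - z)))
      (∫ t in (0:ℝ)..(2*Real.pi),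
      (b t : ℂ) * (2 * Complex.exp (Complex.I * t) / (Complex.exp (Complex.I * t) - z₀)^2)) z₀ := by
  obtain ⟨M, hM0, hM⟩ := bbound b hb hbper
  set ε := (1 - ‖z₀‖) / 2 with hε
  have hε0 : 0 < ε := by simp only [hε]; linarith
  set r := (1 + ‖z₀‖) / 2 with hr
  have hr1 : r < 1 := by simp only [hr]; linarith
  have hball : ∀ x ∈ Metric.ball z₀ ε, ‖x‖ ≤ r := by
    intro x hx
    rw [Metric.mem_ball] at hx
    have h2 : ‖x‖ - ‖z₀‖ ≤ ‖x - z₀‖ := norm_sub_norm_le x z₀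
    rw [dist_eq_norm] at hx
    have : ‖x‖ = ‖x‖ := rfl
    rw [this, hr]
    have : ‖z₀‖ = ‖z₀‖ := rfl
    rw [this]
    linarith
  have habs : ∀ x, ‖x‖ ≤ r → ∀ t : ℝ, 1 - r ≤ ‖Complex.exp (Complex.I * t) - x‖ := by
    intro x hx t
    calc 1 - r ≤ ‖Complex.exp (Complex.I * t)‖ - ‖x‖ := by
          rw [abs_exp_I_mul]; linarith
    _ ≤ _ := by
          exact norm_sub_norm_le (Complex.exp (Complex.I * t)) x
  refine (intervalIntegral.hasDerivAt_integral_of_dominated_loc_of_deriv_le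
    (μ := MeasureTheory.volume)
    (F := fun x t => (b t : ℂ) * ((Complex.exp (Complex.I * t) + x) / (Complex.exp (Complex.I * t) - x)))
    (F' := fun x t => (b t : ℂ) * (2 * Complex.exp (Complex.I * t) / (Complex.exp (Complex.I * t) - x)^2))
    (x₀ := z₀) (a := 0) (b := 2*Real.pi) (bound := fun _ => M * (2 / (1-r)^2)) (Metric.ball_mem_nhds z₀ hε0)
    ?meas ?int ?meas' ?bnd ?bint ?diff).2
  case meas =>
    filter_upwards [Metric.ball_mem_nhds z₀ hε0] with x hx
    have hx1 : ‖x‖ < 1 := lt_of_le_of_lt (hball x hx) hr1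
    exact ((kernel_cont hx1 b hb)).aestronglyMeasurable
  case int => exact (kernel_cont hz₀ b hb).intervalIntegrable _ _
  case meas' =>
    apply Continuous.aestronglyMeasurable
    apply Continuous.mul (by fun_prop)
    apply Continuous.div (by fun_prop) (by fun_prop)
    intro t
    exact pow_ne_zero _ (sub_ne' hz₀ t)
  case bnd =>
    apply MeasureTheory.ae_of_all
    intro t _ x hx
    have hx1 : ‖x‖ ≤ r := hball x hx
    have h1 : 1 - r ≤ ‖Complex.exp (Complex.I * t) - x‖ := habs x hx1 t
    have e1 : ‖(b t : ℂ)‖ ≤ M := by rw [Complex.norm_real, Real.norm_eq_abs]; exact hM t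
    have e2 : ‖2 * Complex.exp (Complex.I * t) / (Complex.exp (Complex.I * t) - x)^2‖
        ≤ 2 / (1-r)^2 := by
      rw [norm_div, norm_mul, norm_pow]
      have h2 : ‖Complex.exp (Complex.I * t)‖ = 1 := abs_exp_I_mul t
      have h3 : ‖(2:ℂ)‖ = 2 := by norm_num
      rw [h2, h3, mul_one]
      apply div_le_div_of_nonneg_left (by norm_num) (pow_pos (by linarith) 2)
      exact pow_le_pow_left₀ (by linarith) h1 2
    calc ‖(b t : ℂ) * (2 * Complex.exp (Complex.I * t) / (Complex.exp (Complex.I * t) - x)^2)‖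
        = ‖(b t : ℂ)‖ * ‖2 * Complex.exp (Complex.I * t) / (Complex.exp (Complex.I * t) - x)^2‖ :=
          norm_mul _ _
      _ ≤ M * (2 / (1-r)^2) := mul_le_mul e1 e2 (norm_nonneg _) hM0.le
  case bint => exact intervalIntegrable_const
  case diff =>
    apply MeasureTheory.ae_of_all
    intro t _ x hx
    have hx1 : ‖x‖ < 1 := lt_of_le_of_lt (hball x hx) hr1
    have hne : Complex.exp (Complex.I * t) - x ≠ 0 := sub_ne' hx1 t
    set w := Complex.exp (Complex.I * t)
    have h1 : HasDerivAt (fun x : ℂ => (w + x) / (w - x))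
        ((1 * (w - x) - (w + x) * (-1)) / (w - x)^2) x :=
      HasDerivAt.div ((hasDerivAt_id x).const_add w)
        ((hasDerivAt_id x).const_sub w) hne
    have h2 : (1 * (w - x) - (w + x) * (-1)) / (w - x)^2 = 2 * w / (w - x)^2 := by
      congr 1; ring
    rw [h2] at h1
    exact h1.const_mul _

-- chord estimate
lemma normSq_exp_sub_exp (t θ₀ : ℝ) :
    Complex.normSq (Complex.exp (Complex.I * t) - Complex.exp (Complex.I * θ₀))
      = 2 - 2 * Real.cos (t - θ₀) := by
  have h1 : ∀ s : ℝ, Complex.exp (Complex.I * s) = Complex.exp (s * Complex.I) := by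
    intro s; rw [mul_comm]
  rw [h1, h1, Complex.normSq_apply]
  simp only [Complex.sub_re, Complex.sub_im, Complex.exp_ofReal_mul_I_re,
    Complex.exp_ofReal_mul_I_im]
  rw [Real.cos_sub]
  have := Real.sin_sq_add_cos_sq t
  have := Real.sin_sq_add_cos_sq θ₀
  ring_nf
  nlinarith [Real.sin_sq_add_cos_sq t, Real.sin_sq_add_cos_sq θ₀]

theorem part3 (b : ℝ → ℝ) (hb : Continuous b) (hbper : Function.Periodic b (2 * Real.pi))
    (M : ℝ) (hM0 : 0 < M) (hM : ∀ t, |b t| ≤ M)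
    (Hre : ℂ → ℝ)
    (hHre : ∀ z : ℂ, ‖z‖ < 1 →
      Hre z = (1 / (2 * Real.pi)) * ∫ t in (0:ℝ)..(2*Real.pi), b t * Pk z t)
    (θ₀ : ℝ) :
    Tendsto (fun z => Hre z) (nhdsWithin (Complex.exp (Complex.I * θ₀)) (Metric.ball 0 1))
      (nhds (b θ₀)) := by
  set ζ := Complex.exp (Complex.I * θ₀) with hζ
  rw [Metric.tendsto_nhdsWithin_nhds]
  intro ε hε
  set ε' := ε / 3 with hε'
  have hε'0 : 0 < ε' := by positivity
  -- continuity delta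
  obtain ⟨δ, hδ0, hδ⟩ := Metric.continuousAt_iff.1 (hb.continuousAt : ContinuousAt b θ₀) ε' hε'0
  set δ2 := min δ Real.pi with hδ2
  have hδ20 : 0 < δ2 := lt_min hδ0 Real.pi_pos
  have hδ2π : δ2 ≤ Real.pi := min_le_right _ _
  set η := 2 - 2 * Real.cos δ2 with hη
  have hcos : Real.cos δ2 < 1 := by
    have := Real.cos_lt_cos_of_nonneg_of_le_pi (le_refl 0) hδ2π hδ20
    simpa using this
  have hη0 : 0 < η := by simp only [hη]; linarith
  set δ' := Real.sqrt η with hδ'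
  have hδ'0 : 0 < δ' := Real.sqrt_pos.2 hη0
  -- far chord bound
  have hfar : ∀ t : ℝ, δ2 ≤ |t - θ₀| → |t - θ₀| ≤ Real.pi →
      δ' ≤ ‖Complex.exp (Complex.I * t) - ζ‖ := by
    intro t h1 h2
    have hns : Complex.normSq (Complex.exp (Complex.I * t) - ζ) = 2 - 2 * Real.cos (t - θ₀) :=
      normSq_exp_sub_exp t θ₀
    have hcos2 : Real.cos (t - θ₀) ≤ Real.cos δ2 := by
      rw [← Real.cos_abs (t - θ₀)]
      exact Real.cos_le_cos_of_nonneg_of_le_pi hδ20.le h2 h1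
    have : η ≤ Complex.normSq (Complex.exp (Complex.I * t) - ζ) := by
      rw [hns, hη]; linarith
    calc δ' = Real.sqrt η := rfl
      _ ≤ Real.sqrt (Complex.normSq (Complex.exp (Complex.I * t) - ζ)) :=
          Real.sqrt_le_sqrt this
      _ = ‖Complex.exp (Complex.I * t) - ζ‖ := by
          rw [Complex.norm_def]
  -- final delta
  set δf := min (δ'/2) (ε' * (δ'/2)^2 / (4*M + 1)) with hδf
  have hδf0 : 0 < δf := by
    apply lt_min (by positivity) (by positivity)
  refine ⟨δf, hδf0, ?_⟩
  intro z hz hdist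
  have hz1 : ‖z‖ < 1 := by simpa using hz
  have habsζ : ‖ζ‖ = 1 := abs_exp_I_mul θ₀
  have hdζ : dist z ζ < δf := hdist
  have hdζ2 : ‖z - ζ‖ < δf := by rwa [dist_eq_norm] at hdζ
  -- pointwise bound
  have hne : ∀ t : ℝ, Complex.exp (Complex.I * t) - z ≠ 0 := sub_ne' hz1
  have honeminus : 1 - Complex.normSq z ≤ 2 * ‖z - ζ‖ := by
    have h1 : 1 - ‖z‖ ≤ ‖z - ζ‖ := by
      have := norm_sub_norm_le ζ z
      have e1 : ‖ζ‖ = 1 := habsζ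
      have e2 : ‖ζ - z‖ = ‖z - ζ‖ := by
        rw [← norm_neg]; congr 1; ring
      rw [e1, e2] at this
      have e3 : ‖z‖ = ‖z‖ := rfl
      linarith [this, e3 ▸ this]
    have h2 : Complex.normSq z = ‖z‖ ^ 2 := (Complex.sq_norm z).symm
    nlinarith [norm_nonneg z, norm_nonneg (z - ζ), hz1]
  have hPk_far : ∀ t : ℝ, δ2 ≤ |t - θ₀| → |t - θ₀| ≤ Real.pi →
      Pk z t ≤ 2 * ‖z - ζ‖ / (δ'/2)^2 := by
    intro t h1 h2
    have hd := hfar t h1 h2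
    have hzd : ‖z - ζ‖ ≤ δ'/2 := le_trans hdζ2.le (min_le_left _ _)
    have hlow : δ'/2 ≤ ‖Complex.exp (Complex.I * t) - z‖ := by
      have := norm_sub_norm_le (Complex.exp (Complex.I * t) - ζ) (z - ζ)
      have e : (Complex.exp (Complex.I * t) - ζ) - (z - ζ) = Complex.exp (Complex.I * t) - z := by
        ring
      rw [e] at this
      have e1 : ‖Complex.exp (Complex.I * t) - ζ‖ = ‖Complex.exp (Complex.I * t) - ζ‖ := rfl
      have e2 : ‖z - ζ‖ = ‖z - ζ‖ := rfl
      have e3 : ‖Complex.exp (Complex.I * t) - z‖ = ‖Complex.exp (Complex.I * t) - z‖ := rfl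
      rw [e1, e2, e3] at this
      linarith
    have hlow2 : (δ'/2)^2 ≤ Complex.normSq (Complex.exp (Complex.I * t) - z) := by
      rw [← Complex.sq_norm]
      exact pow_le_pow_left₀ (by positivity) hlow 2
    rw [Pk]
    exact div_le_div₀ (by positivity) honeminus (by positivity) hlow2
  set Cz := 2 * ‖z - ζ‖ / (δ'/2)^2 with hCz
  have hPkz := Pk_nonneg hz1
  have hd : (0:ℝ) < (δ'/2)^2 := by positivity
  have hCzε : 2 * M * Cz ≤ ε' := by
    have hA : ‖z - ζ‖ ≤ ε' * (δ'/2)^2 / (4*M + 1) :=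
      le_trans hdζ2.le (min_le_right _ _)
    have h1 : ‖z - ζ‖ * (4*M + 1) ≤ ε' * (δ'/2)^2 := by
      rw [← le_div_iff₀ (by positivity)]
      exact hA
    have h2 : 2*M*Cz = (4*M*‖z - ζ‖)/(δ'/2)^2 := by rw [hCz]; ring
    rw [h2, div_le_iff₀ hd]
    nlinarith [norm_nonneg (z - ζ)]
  have hpt : ∀ t ∈ Set.Icc (θ₀ - Real.pi) (θ₀ + Real.pi),
      |(b t - b θ₀) * Pk z t| ≤ ε' * Pk z t + ε' := by
    intro t ht
    have habs_t : |t - θ₀| ≤ Real.pi := by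
      rw [abs_le]; constructor
      · linarith [ht.1]
      · linarith [ht.2]
    rcases lt_or_ge (|t - θ₀|) δ2 with hnear | hfar2
    · have hbt : |b t - b θ₀| ≤ ε' := by
        have h3 : dist t θ₀ < δ := by
          rw [Real.dist_eq]
          exact lt_of_lt_of_le hnear (min_le_left _ _)
        have := hδ h3
        rw [Real.dist_eq] at this
        exact this.le
      rw [abs_mul, _root_.abs_of_nonneg (hPkz t)]
      have := mul_le_mul_of_nonneg_right hbt (hPkz t)
      linarith [hε'0]
    · have h1 : Pk z t ≤ Cz := hPk_far t hfar2 habs_t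
      have h2 : |b t - b θ₀| ≤ 2*M := by
        have h3 := hM t; have h4 := hM θ₀
        rw [abs_le] at h3 h4 ⊢
        constructor <;> [linarith; linarith]
      rw [abs_mul, _root_.abs_of_nonneg (hPkz t)]
      have h5 : |b t - b θ₀| * Pk z t ≤ 2*M*Cz :=
        mul_le_mul h2 h1 (hPkz t) (by positivity)
      have h6 : 0 ≤ ε' * Pk z t := mul_nonneg hε'0.le (hPkz t)
      linarith
  have hIccle : θ₀ - Real.pi ≤ θ₀ + Real.pi := by linarith [Real.pi_pos]
  have hg_cont : Continuous (fun t => (b t - b θ₀) * Pk z t) :=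
    ((hb.sub continuous_const).mul (Pk_cont hz1))
  have hshiftPk : (∫ t in (θ₀-Real.pi)..(θ₀+Real.pi), Pk z t) = 2*Real.pi := by
    have h := (Pk_periodic z).intervalIntegral_add_eq (θ₀ - Real.pi) 0
    rw [zero_add, show θ₀ - Real.pi + 2*Real.pi = θ₀ + Real.pi by ring] at h
    rw [h, int_Pk hz1]
  have hshiftb : (∫ t in (θ₀-Real.pi)..(θ₀+Real.pi), b t * Pk z t)
      = ∫ t in (0:ℝ)..(2*Real.pi), b t * Pk z t := by
    have h := (hbper.mul (Pk_periodic z)).intervalIntegral_add_eq (θ₀ - Real.pi) 0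
    rw [zero_add, show θ₀ - Real.pi + 2*Real.pi = θ₀ + Real.pi by ring] at h
    exact h
  have hsplitint : (∫ t in (θ₀-Real.pi)..(θ₀+Real.pi), (b t - b θ₀) * Pk z t)
      = (∫ t in (θ₀-Real.pi)..(θ₀+Real.pi), b t * Pk z t)
        - b θ₀ * ∫ t in (θ₀-Real.pi)..(θ₀+Real.pi), Pk z t := by
    rw [← intervalIntegral.integral_const_mul,
      ← intervalIntegral.integral_sub (show IntervalIntegrable (fun t => b t * Pk z t) _ _ _ from
          (hb.mul (Pk_cont hz1)).intervalIntegrable _ _)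
        (show IntervalIntegrable (fun t => b θ₀ * Pk z t) _ _ _ from
          (continuous_const.mul (Pk_cont hz1)).intervalIntegrable _ _)]
    apply intervalIntegral.integral_congr
    intro t _
    simp only []
    ring
  have hsub : Hre z - b θ₀ = (1/(2*Real.pi))
      * ∫ t in (θ₀-Real.pi)..(θ₀+Real.pi), (b t - b θ₀) * Pk z t := by
    rw [hHre z hz1, hsplitint, hshiftPk, hshiftb]
    field_simp
  have hintbound : |∫ t in (θ₀-Real.pi)..(θ₀+Real.pi), (b t - b θ₀) * Pk z t|
      ≤ 2*Real.pi*ε' + 2*Real.pi*ε' := by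
    calc |∫ t in (θ₀-Real.pi)..(θ₀+Real.pi), (b t - b θ₀) * Pk z t|
        ≤ ∫ t in (θ₀-Real.pi)..(θ₀+Real.pi), |(b t - b θ₀) * Pk z t| :=
          intervalIntegral.abs_integral_le_integral_abs hIccle
      _ ≤ ∫ t in (θ₀-Real.pi)..(θ₀+Real.pi), (ε' * Pk z t + ε') := by
          apply intervalIntegral.integral_mono_on hIccle
            (hg_cont.abs.intervalIntegrable _ _)
            (((continuous_const.mul (Pk_cont hz1)).add continuous_const).intervalIntegrable _ _)
          exact hpt
      _ = 2*Real.pi*ε' + 2*Real.pi*ε' := by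
          rw [intervalIntegral.integral_add
            (show IntervalIntegrable (fun t => ε' * Pk z t) _ _ _ from
              (continuous_const.mul (Pk_cont hz1)).intervalIntegrable _ _)
            intervalIntegrable_const,
            intervalIntegral.integral_const_mul, hshiftPk,
            intervalIntegral.integral_const]
          rw [smul_eq_mul]
          ring
  rw [Real.dist_eq, hsub, abs_mul]
  have hπ : (0:ℝ) < 2*Real.pi := by positivity
  have h7 : |1/(2*Real.pi)| = 1/(2*Real.pi) := abs_of_pos (by positivity)
  rw [h7]
  calc 1/(2*Real.pi) * |∫ t in (θ₀-Real.pi)..(θ₀+Real.pi), (b t - b θ₀) * Pk z t|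
      ≤ 1/(2*Real.pi) * (2*Real.pi*ε' + 2*Real.pi*ε') := by
        apply mul_le_mul_of_nonneg_left hintbound (by positivity)
    _ = 2*ε' := by field_simp; ring
    _ < ε := by rw [hε']; linarith

-- re ≤ ε on disk from boundary decay
lemma re_le_eps (g : ℂ → ℂ) (hg : DifferentiableOn ℂ g (Metric.ball 0 1))
    (hbd : ∀ ζ : ℂ, ‖ζ‖ = 1 →
      Tendsto (fun z => (g z).re) (nhdsWithin ζ (Metric.ball 0 1)) (nhds 0))
    {ε : ℝ} (hε : 0 < ε) {z₀ : ℂ} (hz₀ : z₀ ∈ Metric.ball (0:ℂ) 1) :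
    (g z₀).re ≤ ε := by
  have h : ∀ ζ : ℂ, ‖ζ‖ = 1 → ∃ U : Set ℂ, IsOpen U ∧ ζ ∈ U ∧
      ∀ z ∈ U ∩ Metric.ball (0:ℂ) 1, (g z).re < ε := by
    intro ζ hζ
    have hev : ∀ᶠ z in nhdsWithin ζ (Metric.ball (0:ℂ) 1), (g z).re < ε :=
      (hbd ζ hζ).eventually_lt_const hε
    obtain ⟨U, hUo, hUζ, hUsub⟩ := mem_nhdsWithin.1 hev
    exact ⟨U, hUo, hUζ, fun z hz => hUsub hz⟩
  choose! U hUo hUmem hUsub using h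
  set T := ⋃ ζ ∈ Metric.sphere (0:ℂ) 1, U ζ with hT
  have hTo : IsOpen T := isOpen_biUnion (fun ζ hζ => hUo ζ (by simpa using hζ))
  have hsT : Metric.sphere (0:ℂ) 1 ⊆ T := fun ζ hζ =>
    Set.mem_biUnion hζ (hUmem ζ (by simpa using hζ))
  have hTball : ∀ z ∈ T ∩ Metric.ball (0:ℂ) 1, (g z).re < ε := by
    rintro z ⟨hzT, hzb⟩
    obtain ⟨ζ, hζ, hzU⟩ := Set.mem_iUnion₂.1 hzT
    exact hUsub ζ (by simpa using hζ) z ⟨hzU, hzb⟩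
  set A := Metric.closedBall (0:ℂ) 1 \ T with hA
  have hAc : IsCompact A := (isCompact_closedBall _ _).diff hTo
  have hAball : ∀ a ∈ A, ‖a‖ < 1 := by
    rintro a ⟨ha1, ha2⟩
    rcases lt_or_eq_of_le (mem_closedBall_zero_iff.1 ha1) with h | h
    · exact h
    · exact absurd (hsT (by simpa using h)) ha2
  obtain ⟨ρ, hρ0, hρ1, hρz, hρA⟩ : ∃ ρ, 0 ≤ ρ ∧ ρ < 1 ∧ ‖z₀‖ ≤ ρ ∧ ∀ a ∈ A, ‖a‖ ≤ ρ := by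
    rcases A.eq_empty_or_nonempty with hAe | hAne
    · exact ⟨‖z₀‖, norm_nonneg _, by simpa using hz₀, le_refl _,
        by simp [hAe]⟩
    · obtain ⟨a, haA, ha⟩ := hAc.exists_isMaxOn hAne continuous_norm.continuousOn
      refine ⟨max ‖a‖ ‖z₀‖, le_trans (norm_nonneg _) (le_max_left _ _),
        max_lt (hAball a haA) (by simpa using hz₀), le_max_right _ _, fun x hx =>
          le_trans (ha hx) (le_max_left _ _)⟩
  set r := (ρ + 1) / 2 with hr
  have hr0 : 0 < r := by simp only [hr]; linarith
  have hr1 : r < 1 := by simp only [hr]; linarith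
  have hρr : ρ < r := by simp only [hr]; linarith
  have hsphere : ∀ z ∈ Metric.sphere (0:ℂ) r, (g z).re < ε := by
    intro z hz
    have hnz : ‖z‖ = r := by simpa using hz
    have hzb : z ∈ Metric.ball (0:ℂ) 1 := by
      rw [mem_ball_zero_iff, hnz]; exact hr1
    have hzT : z ∈ T := by
      by_contra hc
      have : z ∈ A := ⟨by rw [Metric.mem_closedBall, dist_zero_right, hnz]; exact hr1.le, hc⟩
      have := hρA z this
      rw [hnz] at this
      linarith
    exact hTball z ⟨hzT, hzb⟩
  -- maximum principle for exp ∘ g on ball 0 r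
  have hsub1 : Metric.closedBall (0:ℂ) r ⊆ Metric.ball (0:ℂ) 1 := by
    intro w hw
    rw [Metric.mem_closedBall] at hw
    rw [Metric.mem_ball]
    linarith
  have hdc : DiffContOnCl ℂ (fun z => Complex.exp (g z)) (Metric.ball (0:ℂ) r) := by
    apply DifferentiableOn.diffContOnCl
    rw [closure_ball (0:ℂ) (ne_of_gt hr0)]
    exact ((hg.mono hsub1)).cexp
  have hC : ∀ w ∈ frontier (Metric.ball (0:ℂ) r), ‖Complex.exp (g w)‖ ≤ Real.exp ε := by
    intro w hw
    rw [frontier_ball (0:ℂ) (ne_of_gt hr0)] at hw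
    rw [Complex.norm_exp]
    exact Real.exp_le_exp.2 (hsphere w hw).le
  have hcl : z₀ ∈ closure (Metric.ball (0:ℂ) r) := by
    rw [closure_ball (0:ℂ) (ne_of_gt hr0), Metric.mem_closedBall, dist_zero_right]
    linarith
  have hmax := Complex.norm_le_of_forall_mem_frontier_norm_le Metric.isBounded_ball hdc hC hcl
  rw [Complex.norm_exp] at hmax
  exact Real.exp_le_exp.1 hmax

lemma g_eq_zero (g : ℂ → ℂ) (hg : DifferentiableOn ℂ g (Metric.ball 0 1))
    (hbd : ∀ ζ : ℂ, ‖ζ‖ = 1 →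
      Tendsto (fun z => (g z).re) (nhdsWithin ζ (Metric.ball 0 1)) (nhds 0))
    (him : (g 0).im = 0) : ∀ z ∈ Metric.ball (0:ℂ) 1, g z = 0 := by
  have hre : ∀ z ∈ Metric.ball (0:ℂ) 1, (g z).re = 0 := by
    intro z hz
    have h1 : ∀ ε : ℝ, 0 < ε → (g z).re ≤ ε := fun ε hε => re_le_eps g hg hbd hε hz
    have hbd' : ∀ ζ : ℂ, ‖ζ‖ = 1 →
        Tendsto (fun z => ((-g) z).re) (nhdsWithin ζ (Metric.ball 0 1)) (nhds 0) := by
      intro ζ hζ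
      have := (hbd ζ hζ).neg
      rw [neg_zero] at this
      convert this using 2 with w
      try simp
    have h2 : ∀ ε : ℝ, 0 < ε → -(g z).re ≤ ε := by
      intro ε hε
      have := re_le_eps (-g) (hg.neg) hbd' hε hz
      simpa using this
    have hle : (g z).re ≤ 0 := by
      by_contra hc
      push_neg at hc
      have := h1 ((g z).re / 2) (by linarith)
      linarith
    have hge : 0 ≤ (g z).re := by
      by_contra hc
      push_neg at hc
      have := h2 (-(g z).re / 2) (by linarith)
      linarith
    linarith
  -- exp ∘ g has constant norm 1, hence constant
  have hnorm : ∀ z ∈ Metric.ball (0:ℂ) 1, ‖Complex.exp (g z)‖ = 1 := by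
    intro z hz
    rw [Complex.norm_exp, hre z hz, Real.exp_zero]
  have hmem0 : (0:ℂ) ∈ Metric.ball (0:ℂ) 1 := by simp
  have hconst : Set.EqOn (fun z => Complex.exp (g z))
      (Function.const ℂ (Complex.exp (g 0))) (Metric.ball (0:ℂ) 1) := by
    apply Complex.eqOn_of_isPreconnected_of_isMaxOn_norm
      (convex_ball (0:ℂ) 1).isPreconnected Metric.isOpen_ball hg.cexp hmem0
    intro z hz
    simp only [Set.mem_setOf_eq, Function.comp_apply]
    rw [hnorm z hz, hnorm 0 hmem0]
  -- deriv g = 0 on ball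
  have hderiv0 : ∀ z ∈ Metric.ball (0:ℂ) 1, HasFDerivAt g (0 : ℂ →L[ℂ] ℂ) z := by
    intro z hz
    have hgz : DifferentiableAt ℂ g z :=
      hg.differentiableAt (Metric.isOpen_ball.mem_nhds hz)
    have hd1 : HasDerivAt (fun z => Complex.exp (g z)) (Complex.exp (g z) * deriv g z) z :=
      hgz.hasDerivAt.cexp
    have hd2 : HasDerivAt (fun z => Complex.exp (g z)) 0 z := by
      have hev : (fun z => Complex.exp (g z)) =ᶠ[nhds z]
          (fun _ => Complex.exp (g 0)) := by
        filter_upwards [Metric.isOpen_ball.mem_nhds hz] with w hw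
        exact hconst hw
      exact (hasDerivAt_const z (Complex.exp (g 0))).congr_of_eventuallyEq hev
    have : Complex.exp (g z) * deriv g z = 0 := hd1.unique hd2
    have hdz : deriv g z = 0 := by
      rcases mul_eq_zero.1 this with h | h
      · exact absurd h (Complex.exp_ne_zero _)
      · exact h
    have := hgz.hasDerivAt
    rw [hdz] at this
    have h9 := this.hasFDerivAt
    have : ContinuousLinearMap.toSpanSingleton ℂ (0:ℂ) = 0 := by
      ext
      simp
    rwa [this] at h9
  -- g constant on ball
  intro z hz
  have hconst2 : g z = g 0 := by
    apply Convex.is_const_of_fderivWithin_eq_zero (convex_ball (0:ℂ) 1) hg _ hz hmem0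
    intro x hx
    have := (hderiv0 x hx).hasFDerivWithinAt.fderivWithin
      (Metric.isOpen_ball.uniqueDiffWithinAt hx)
    exact this
  rw [hconst2]
  have : (g 0).re = 0 := hre 0 hmem0
  exact Complex.ext this him


/-- The Schwarz boundary value problem for anti-holomorphic functions (`∂H/∂z = 0`,
i.e. `conj ∘ H` holomorphic) on the unit disk with continuous boundary datum:
existence, boundary behavior, normalization, and uniqueness in the class of functions
whose conjugate is holomorphic. -/
theorem schwarz_bvp_antiholomorphic (b : ℝ → ℝ) (hb : Continuous b)
    (hbper : Function.Periodic b (2 * Real.pi)) (c : ℝ) :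
    (∀ z ∈ unitDisk, DifferentiableAt ℂ
        (fun w => (starRingEnd ℂ) (conjSchwarzIntegral b c w)) z) ∧
      (conjSchwarzIntegral b c 0).im = c ∧
      (∀ θ₀ : ℝ, Tendsto (fun z => (conjSchwarzIntegral b c z).re)
        (nhdsWithin (Complex.exp (Complex.I * θ₀)) unitDisk) (nhds (b θ₀))) ∧
      (∀ K : ℂ → ℂ,
        (∀ z ∈ unitDisk, DifferentiableAt ℂ (fun w => (starRingEnd ℂ) (K w)) z) →
        (K 0).im = c →
        (∀ θ₀ : ℝ, Tendsto (fun z => (K z).re)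
          (nhdsWithin (Complex.exp (Complex.I * θ₀)) unitDisk) (nhds (b θ₀))) →
        ∀ z ∈ unitDisk, K z = conjSchwarzIntegral b c z) := by
  obtain ⟨M, hM0, hM⟩ := bbound b hb hbper
  have hdiff : ∀ z ∈ unitDisk, DifferentiableAt ℂ
      (fun w => (starRingEnd ℂ) (conjSchwarzIntegral b c w)) z := by
    intro z hz
    have hz1 : ‖z‖ < 1 := by
      simpa [unitDisk] using hz
    have hS := S_diff b hb hbper hz1
    have heq : (fun w => (starRingEnd ℂ) (conjSchwarzIntegral b c w))
        = fun w => (1 / (2 * (Real.pi:ℂ))) * (∫ t in (0:ℝ)..(2*Real.pi),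
            (b t : ℂ) * ((Complex.exp (Complex.I * t) + w) / (Complex.exp (Complex.I * t) - w)))
          - Complex.I * c := by
      funext w
      simp only [conjSchwarzIntegral, map_add, Complex.conj_conj, map_mul, Complex.conj_I,
        Complex.conj_ofReal]
      ring
    rw [heq]
    exact (hS.differentiableAt.const_mul _).sub (differentiableAt_const _)
  have him : (conjSchwarzIntegral b c 0).im = c := Him0 b hb c
  have hbdry : ∀ θ₀ : ℝ, Tendsto (fun z => (conjSchwarzIntegral b c z).re)
      (nhdsWithin (Complex.exp (Complex.I * θ₀)) unitDisk) (nhds (b θ₀)) := by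
    intro θ₀
    exact part3 b hb hbper M hM0 hM (fun z => (conjSchwarzIntegral b c z).re)
      (fun z hz => Hre_formula b hb c hz) θ₀
  refine ⟨hdiff, him, hbdry, ?_⟩
  intro K hK1 hK2 hK3 z hz
  have hz1 : z ∈ Metric.ball (0:ℂ) 1 := hz
  set g : ℂ → ℂ := fun w => (starRingEnd ℂ) (K w) - (starRingEnd ℂ) (conjSchwarzIntegral b c w)
    with hgdef
  have hgdiff : DifferentiableOn ℂ g (Metric.ball 0 1) := by
    intro w hw
    have hw' : w ∈ unitDisk := hw
    exact ((hK1 w hw').sub (hdiff w hw')).differentiableWithinAt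
  have hbdg : ∀ ζ : ℂ, ‖ζ‖ = 1 →
      Tendsto (fun z => (g z).re) (nhdsWithin ζ (Metric.ball 0 1)) (nhds 0) := by
    intro ζ hζ
    have hζeq : Complex.exp (Complex.I * (Complex.arg ζ : ℝ)) = ζ := by
      have h := Complex.norm_mul_exp_arg_mul_I ζ
      rw [hζ] at h
      rw [mul_comm]
      simpa using h
    have h1 := (hK3 (Complex.arg ζ)).sub (hbdry (Complex.arg ζ))
    rw [sub_self, hζeq] at h1
    have heq2 : (fun z => (g z).re)
        = fun z => (K z).re - (conjSchwarzIntegral b c z).re := by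
      funext w
      simp [hgdef, Complex.sub_re]
    rw [heq2]
    exact h1
  have him0 : (g 0).im = 0 := by
    simp [hgdef, Complex.sub_im, hK2, him]
  have hgz := g_eq_zero g hgdiff hbdg him0 z hz1
  have : (starRingEnd ℂ) (K z) = (starRingEnd ℂ) (conjSchwarzIntegral b c z) := by
    have := sub_eq_zero.1 hgz
    exact this
  exact (starRingEnd ℂ).injective this
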